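/- Let G be an inverse semigroup. For g ∈ G define φ_g : G → ℂ by φ_g(t) = 1 if t ≤ g (equivalently t = t t⁻¹ g) and φ_g(t) = 0 otherwise. Then the family (φ_g)_{g ∈ G} is linearly independent in the complex vector space of all functions G → ℂ. -/

import Mathlib

section Aux
variable {G : Type*} [Semigroup G] (inv : G → G)

lemma st12_inv_idem (hinv_unique : ∀ g i, g * i * g = g → i * g * i = i → i = inv g)
    {e : G} (he : e * e = e) : inv e = e :=
  (hinv_unique e e (by rw [he, he]) (by rw [he, he])).symm

lemma st12_inv_inv (hinv1 : ∀ g, g * inv g * g = g) (hinv2 : ∀ g, inv g * g * inv g = inv g)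
    (hinv_unique : ∀ g i, g * i * g = g → i * g * i = i → i = inv g)
    (g : G) : inv (inv g) = g :=
  (hinv_unique (inv g) g (hinv2 g) (hinv1 g)).symm

lemma st12_mul_inv_idem (hinv1 : ∀ g, g * inv g * g = g) (g : G) :
    (g * inv g) * (g * inv g) = g * inv g := by
  calc (g * inv g) * (g * inv g) = g * inv g * g * inv g := by simp [mul_assoc]
    _ = g * inv g := by rw [hinv1]

lemma st12_idem_comm (hinv1 : ∀ g, g * inv g * g = g) (hinv2 : ∀ g, inv g * g * inv g = inv g)
    (hinv_unique : ∀ g i, g * i * g = g → i * g * i = i → i = inv g)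
    {e f : G} (he : e * e = e) (hf : f * f = f) : e * f = f * e := by
  have key : ∀ a b : G, a * a = a → b * b = b → a * b * (a * b) = a * b := by
    intro a b ha hb
    set x := inv (a * b) with hx
    have hA : x = b * x * a := by
      symm
      apply hinv_unique (a*b)
      · calc a * b * (b * x * a) * (a * b) = a * (b * b) * x * (a * a) * b := by
              simp [mul_assoc]
          _ = a * b * x * (a * b) := by rw [ha, hb]; simp [mul_assoc]
          _ = a * b := hinv1 _
      · calc b * x * a * (a * b) * (b * x * a)
            = b * (x * ((a * a) * ((b * b) * (x * a)))) := by simp [mul_assoc]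
          _ = b * (x * (a * (b * (x * a)))) := by rw [ha, hb]
          _ = b * (x * (a*b) * x) * a := by simp [mul_assoc]
          _ = b * x * a := by rw [hinv2]
    have hxidem : x * x = x := by
      have : x * x = b * x * a := by
        calc x * x = (b * x * a) * (b * x * a) := by rw [← hA]
          _ = b * (x * (a * b) * x) * a := by simp [mul_assoc]
          _ = b * x * a := by rw [hinv2]
      rw [this]; exact hA.symm
    have hab : a * b = x := by
      have h1 : inv x = x := st12_inv_idem inv hinv_unique hxidem
      have h2 : inv x = a * b := by rw [hx, st12_inv_inv inv hinv1 hinv2 hinv_unique]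
      rw [← h2, h1]
    rw [hab]; exact hxidem
  have hef : e * f * (e * f) = e * f := key e f he hf
  have hfe : f * e * (f * e) = f * e := key f e hf he
  have hfeq : f * e = inv (e * f) := by
    apply hinv_unique
    · calc e * f * (f * e) * (e * f) = e * (f * f) * (e * e) * f := by simp [mul_assoc]
        _ = e * f * (e * f) := by rw [he, hf]; simp [mul_assoc]
        _ = e * f := hef
    · calc f * e * (e * f) * (f * e) = f * (e * e) * (f * f) * e := by simp [mul_assoc]
        _ = f * e * (f * e) := by rw [he, hf]; simp [mul_assoc]
        _ = f * e := hfe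
  rw [hfeq, st12_inv_idem inv hinv_unique hef]

lemma st12_prod_idem (hinv1 : ∀ g, g * inv g * g = g) (hinv2 : ∀ g, inv g * g * inv g = inv g)
    (hinv_unique : ∀ g i, g * i * g = g → i * g * i = i → i = inv g)
    {e f : G} (he : e * e = e) (hf : f * f = f) : (e * f) * (e * f) = e * f := by
  calc (e * f) * (e * f) = e * (f * e) * f := by simp [mul_assoc]
    _ = e * (e * f) * f := by rw [st12_idem_comm inv hinv1 hinv2 hinv_unique he hf]
    _ = (e * e) * (f * f) := by simp [mul_assoc]
    _ = e * f := by rw [he, hf]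

lemma st12_le_of_idem_mul (hinv1 : ∀ g, g * inv g * g = g)
    (hinv2 : ∀ g, inv g * g * inv g = inv g)
    (hinv_unique : ∀ g i, g * i * g = g → i * g * i = i → i = inv g)
    {e s t : G} (he : e * e = e) (h : s = e * t) :
    s = s * inv s * t := by
  have hes : e * s = s := by rw [h, ← mul_assoc, he]
  have hjs : inv s = inv s * e := by
    symm
    apply hinv_unique
    · calc s * (inv s * e) * s = s * inv s * (e * s) := by simp [mul_assoc]
        _ = s := by rw [hes, hinv1]
    · calc inv s * e * s * (inv s * e) = inv s * (e * s) * inv s * e := by simp [mul_assoc]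
        _ = inv s * s * inv s * e := by rw [hes]
        _ = inv s * e := by rw [hinv2]
  calc s = s * inv s * s := (hinv1 s).symm
    _ = s * inv s * (e * t) := by rw [← h]
    _ = s * (inv s * e) * t := by simp [mul_assoc]
    _ = s * inv s * t := by rw [← hjs]

lemma st12_le_trans (hinv1 : ∀ g, g * inv g * g = g)
    (hinv2 : ∀ g, inv g * g * inv g = inv g)
    (hinv_unique : ∀ g i, g * i * g = g → i * g * i = i → i = inv g)
    {s t u : G} (h1 : s = s * inv s * t) (h2 : t = t * inv t * u) :
    s = s * inv s * u := by
  have he : ((s * inv s) * (t * inv t)) * ((s * inv s) * (t * inv t))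
      = (s * inv s) * (t * inv t) :=
    st12_prod_idem inv hinv1 hinv2 hinv_unique (st12_mul_inv_idem inv hinv1 s)
      (st12_mul_inv_idem inv hinv1 t)
  apply st12_le_of_idem_mul inv hinv1 hinv2 hinv_unique he
  calc s = s * inv s * t := h1
    _ = s * inv s * (t * inv t * u) := by rw [← h2]
    _ = s * inv s * (t * inv t) * u := by simp [mul_assoc]

lemma st12_le_antisymm (hinv1 : ∀ g, g * inv g * g = g)
    (hinv2 : ∀ g, inv g * g * inv g = inv g)
    (hinv_unique : ∀ g i, g * i * g = g → i * g * i = i → i = inv g)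
    {s t : G} (h1 : s = s * inv s * t) (h2 : t = t * inv t * s) : s = t := by
  have he := st12_mul_inv_idem inv hinv1 s
  have hf := st12_mul_inv_idem inv hinv1 t
  have hs : s = (s * inv s) * ((t * inv t) * s) := by
    conv_lhs => rw [h1, h2]
  have ht : t = s := by
    calc t = t * inv t * s := h2
      _ = t * inv t * ((s * inv s) * ((t * inv t) * s)) := by rw [← hs]
      _ = (t * inv t) * (s * inv s) * ((t * inv t) * s) := by simp [mul_assoc]
      _ = (s * inv s) * (t * inv t) * ((t * inv t) * s) := by
          rw [st12_idem_comm inv hinv1 hinv2 hinv_unique hf he]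
      _ = (s * inv s) * (((t * inv t) * (t * inv t)) * s) := by simp [mul_assoc]
      _ = (s * inv s) * ((t * inv t) * s) := by rw [hf]
      _ = s := hs.symm
  exact ht.symm

end Aux

/-- For an inverse semigroup `G`, the family of functions
`φ_g : G → ℂ`, `φ_g(t) = 1` if `t ≤ g` (i.e. `t = t t⁻¹ g`) and `0` otherwise,
is linearly independent over `ℂ`. -/
theorem stmt12 {G : Type*} [Semigroup G]
    (inv : G → G)
    (hinv1 : ∀ g, g * inv g * g = g)
    (hinv2 : ∀ g, inv g * g * inv g = inv g)
    (hinv_unique : ∀ g i, g * i * g = g → i * g * i = i → i = inv g) :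
    LinearIndependent ℂ
      (fun g : G => Set.indicator {t : G | t = t * inv t * g} (fun _ => (1 : ℂ))) := by
  classical
  letI order : PartialOrder G :=
    { le := fun s t => s = s * inv s * t
      le_refl := fun g => (hinv1 g).symm
      le_trans := fun a b c => st12_le_trans inv hinv1 hinv2 hinv_unique
      le_antisymm := fun a b => st12_le_antisymm inv hinv1 hinv2 hinv_unique }
  rw [linearIndependent_iff']
  intro s
  induction s using Finset.strongInduction with
  | _ s ih =>
    intro f hf g hg
    have hsne : s.Nonempty := ⟨g, hg⟩
    obtain ⟨a, ha, hamax⟩ : ∃ a ∈ s, ∀ x ∈ s, ¬ a < x := by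
      obtain ⟨a, ha, hm⟩ := Finset.exists_maximal hsne
      exact ⟨a, ha, fun x hx hlt => hlt.not_ge (hm hx hlt.le)⟩
    have hfa : f a = 0 := by
      have hev := congrFun hf a
      simp only [Finset.sum_apply, Pi.smul_apply, Pi.zero_apply, smul_eq_mul] at hev
      have hsum : ∀ h ∈ s, f h * Set.indicator {t : G | t = t * inv t * h} (fun _ => (1:ℂ)) a
          = if h = a then f a else 0 := by
        intro h hh
        by_cases hha : h = a
        · subst hha
          rw [if_pos rfl,
            Set.indicator_of_mem (show h ∈ {t : G | t = t * inv t * h} from (hinv1 h).symm),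
            mul_one]
        · rw [if_neg hha]
          rcases Classical.em (a = a * inv a * h) with hle | hnle
          · exfalso
            have hlt : a < h := lt_of_le_of_ne hle (fun e => hha e.symm)
            exact hamax h hh hlt
          · simp [Set.indicator_apply, Set.mem_setOf_eq, hnle]
      rw [Finset.sum_congr rfl hsum, Finset.sum_ite_eq' s a (fun _ => f a), if_pos ha] at hev
      exact hev
    by_cases hga : g = a
    · rw [hga]; exact hfa
    · have hsub : s.erase a ⊂ s := Finset.erase_ssubset ha
      apply ih (s.erase a) hsub f _ g (Finset.mem_erase.mpr ⟨hga, hg⟩)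
      rw [← Finset.add_sum_erase s _ ha, hfa] at hf
      simpa using hf
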